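/- Let N ≥ 1, p > 1, g : ℝ → ℝ be nonnegative, nondecreasing and locally Lipschitz, and let u be a C² radial solution of -Δ_p u = g(u) on the punctured unit ball of ℝᴺ with u_r(r) < 0 for all r ∈ (0,1). Then g(u(r)) ≤ N |u_r(r)|^{p-1} / r for all r ∈ (0,1]. -/
import Mathlib


open Real Set

/-- For a radial solution of `-Δ_p u = g(u)` on the punctured unit ball with `u_r < 0`,
where `g ≥ 0` is nondecreasing and locally Lipschitz, one has
`g(u(r)) ≤ N |u_r(r)|^{p-1} / r` for all `r ∈ (0,1]`.
The equation in radial coordinates reads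
`∂_r ( r^{N-1} |u_r|^{p-1} ) = r^{N-1} g(u)` (using `u_r < 0`). -/
theorem g_pointwise_bound
    (N p : ℝ) (hN : 1 ≤ N) (hp : 1 < p)
    (g : ℝ → ℝ) (hg0 : ∀ x, 0 ≤ g x) (hgmono : Monotone g)
    (hglip : LocallyLipschitz g)
    (u u' : ℝ → ℝ)
    (hu : ∀ r ∈ Ioc (0:ℝ) 1, HasDerivAt u (u' r) r)
    (hu'neg : ∀ r ∈ Ioc (0:ℝ) 1, u' r < 0)
    (heq : ∀ r ∈ Ioc (0:ℝ) 1,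
      HasDerivAt (fun s => s ^ (N - 1) * |u' s| ^ (p - 1))
        (r ^ (N - 1) * g (u r)) r) :
    ∀ r ∈ Ioc (0:ℝ) 1, g (u r) ≤ N * |u' r| ^ (p - 1) / r := by
  intro r hr
  obtain ⟨hr0, hr1⟩ := hr
  have hN0 : (0:ℝ) < N := lt_of_lt_of_le one_pos hN
  set c := g (u r) with hc
  set F : ℝ → ℝ := fun s => s ^ (N - 1) * |u' s| ^ (p - 1) with hF
  -- derivative of t ↦ c * (t^N / N)
  have hpow : ∀ t : ℝ, HasDerivAt (fun t => c * (t ^ N / N)) (c * t ^ (N - 1)) t := by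
    intro t
    have h := ((Real.hasDerivAt_rpow_const (x := t) (p := N) (Or.inr hN)).div_const N).const_mul c
    have : c * (N * t ^ (N - 1) / N) = c * t ^ (N - 1) := by
      field_simp
    rwa [this] at h
  -- monotonicity : c ≤ g (u s) for 0 < s ≤ r
  have hkey : ∀ s ∈ Ioc (0:ℝ) r, c ≤ g (u s) := by
    intro s hs
    apply hgmono
    rcases eq_or_lt_of_le hs.2 with heqs | hlt
    · rw [heqs]
    · have hsub : Icc s r ⊆ Ioc (0:ℝ) 1 := fun x hx =>
        ⟨lt_of_lt_of_le hs.1 hx.1, le_trans hx.2 hr1⟩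
      have hanti : StrictAntiOn u (Icc s r) := by
        apply strictAntiOn_of_deriv_neg (convex_Icc s r)
        · intro x hx
          exact (hu x (hsub hx)).continuousAt.continuousWithinAt
        · intro x hx
          rw [interior_Icc] at hx
          have hx' : x ∈ Ioc (0:ℝ) 1 := hsub ⟨le_of_lt hx.1, le_of_lt hx.2⟩
          rw [(hu x hx').deriv]
          exact hu'neg x hx'
      exact le_of_lt (hanti ⟨le_refl s, le_of_lt hlt⟩ ⟨le_of_lt hlt, le_refl r⟩ hlt)
  -- Step B : for all ε ∈ (0, r),  c * (r^N - ε^N) / N ≤ F r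
  have hB : ∀ ε ∈ Ioo (0:ℝ) r, c * (r ^ N - ε ^ N) / N ≤ F r := by
    intro ε hε
    set H : ℝ → ℝ := fun t => F t - c * (t ^ N / N) with hH
    have hsub : Icc ε r ⊆ Ioc (0:ℝ) 1 := fun x hx =>
      ⟨lt_of_lt_of_le hε.1 hx.1, le_trans hx.2 hr1⟩
    have hHd : ∀ x ∈ Ioc (0:ℝ) 1,
        HasDerivAt H (x ^ (N - 1) * g (u x) - c * x ^ (N - 1)) x := by
      intro x hx
      exact (heq x hx).sub (hpow x)
    have hmono : MonotoneOn H (Icc ε r) := by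
      apply monotoneOn_of_deriv_nonneg (convex_Icc ε r)
      · intro x hx
        exact (hHd x (hsub hx)).continuousAt.continuousWithinAt
      · intro x hx
        rw [interior_Icc] at hx
        exact (hHd x (hsub ⟨le_of_lt hx.1, le_of_lt hx.2⟩)).differentiableAt.differentiableWithinAt
      · intro x hx
        rw [interior_Icc] at hx
        have hx' : x ∈ Ioc (0:ℝ) 1 := hsub ⟨le_of_lt hx.1, le_of_lt hx.2⟩
        rw [(hHd x hx').deriv]
        have hxr : x ∈ Ioc (0:ℝ) r := ⟨hx'.1, le_of_lt hx.2⟩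
        have h1 : c ≤ g (u x) := hkey x hxr
        have h2 : (0:ℝ) ≤ x ^ (N - 1) := Real.rpow_nonneg (le_of_lt hx'.1) _
        nlinarith
    have hle : H ε ≤ H r :=
      hmono ⟨le_refl ε, le_of_lt hε.2⟩ ⟨le_of_lt hε.2, le_refl r⟩ (le_of_lt hε.2)
    have hFε : 0 ≤ F ε :=
      mul_nonneg (Real.rpow_nonneg (le_of_lt hε.1) _) (Real.rpow_nonneg (abs_nonneg _) _)
    simp only [hH] at hle
    have : c * (r ^ N / N) - c * (ε ^ N / N) ≤ F r := by linarith
    calc c * (r ^ N - ε ^ N) / N = c * (r ^ N / N) - c * (ε ^ N / N) := by ring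
    _ ≤ F r := this
  -- Step C : limit ε → 0⁺ gives  c * r^N / N ≤ F r
  have htend : Filter.Tendsto (fun ε : ℝ => c * (r ^ N - ε ^ N) / N) (nhdsWithin 0 (Ioi 0))
      (nhds (c * r ^ N / N)) := by
    have h1 : Filter.Tendsto (fun ε : ℝ => ε ^ N) (nhdsWithin 0 (Ioi 0)) (nhds 0) := by
      have := (Real.continuousAt_rpow_const 0 N (Or.inr hN0.le)).tendsto.mono_left
        (nhdsWithin_le_nhds (s := Ioi (0:ℝ)))
      rwa [Real.zero_rpow (ne_of_gt hN0)] at this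
    have h2 : Filter.Tendsto (fun ε : ℝ => c * (r ^ N - ε ^ N) / N)
        (nhdsWithin 0 (Ioi 0)) (nhds (c * (r ^ N - 0) / N)) :=
      (((h1.const_sub (r ^ N)).const_mul c).div_const N)
    simpa using h2
  have hCle : c * r ^ N / N ≤ F r := by
    apply le_of_tendsto htend
    filter_upwards [Ioo_mem_nhdsGT_of_mem (Set.mem_Ico.mpr ⟨le_refl 0, hr0⟩)] with ε hε
    exact hB ε hε
  -- conclusion
  have hrN : (0:ℝ) < r ^ N := Real.rpow_pos_of_pos hr0 N
  have hsplit : r ^ N = r * r ^ (N - 1) := by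
    rw [Real.rpow_sub hr0, Real.rpow_one]
    field_simp
  rw [le_div_iff₀ hr0]
  have hF' : F r = r ^ (N - 1) * |u' r| ^ (p - 1) := rfl
  have h3 : c * (r * r ^ (N - 1)) ≤ N * (r ^ (N - 1) * |u' r| ^ (p - 1)) := by
    rw [← hsplit, ← hF']
    rw [div_le_iff₀ hN0] at hCle
    linarith [hCle]
  have hrN1 : (0:ℝ) < r ^ (N - 1) := Real.rpow_pos_of_pos hr0 _
  nlinarith [h3, hrN1]
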